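/- Let L be a split δ Jordan-Lie algebra with symmetric root system Λ, and let U be a vector space complement of span{[L_α, L_{-α}] : α ∈ Λ} in H. Then L = U + Σ_{[α]∈Λ/~} I_{[α]}, where each I_{[α]} = L_{Λ_α} is an ideal of L, and [I_{[α]}, I_{[β]}] = 0 whenever [α] ≠ [β]. -/
import Mathlib


/-- A δ Jordan-Lie algebra: a vector space with a bilinear bracket satisfying
`[x,y] = -δ[y,x]` and `[x,[y,z]] = δ[[x,y],z] + δ[y,[x,z]]` with `δ = ±1`. -/
structure DeltaJordanLie (K L : Type*) [Field K] [AddCommGroup L] [Module K L] where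
  br : L →ₗ[K] L →ₗ[K] L
  delta : K
  delta_pm : delta = 1 ∨ delta = -1
  anti : ∀ x y : L, br x y = -(delta • br y x)
  jacobi : ∀ x y z : L, br x (br y z) = delta • br (br x y) z + delta • br y (br x z)

variable {K L : Type*} [Field K] [AddCommGroup L] [Module K L]

/-- The root space `L_α = {v ∈ L : [h,v] = α(h)v for all h ∈ H}`. -/
def DeltaJordanLie.rootSpace (J : DeltaJordanLie K L) (H : Submodule K L)
    (α : Module.Dual K H) : Submodule K L where
  carrier := {v : L | ∀ h : H, J.br (h : L) v = α h • v}
  zero_mem' := by intro h; simp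
  add_mem' := by intro a b ha hb h; simp [ha h, hb h, smul_add]
  smul_mem' := by intro c a ha h; rw [map_smul, ha h, smul_comm]

/-- The root system `Λ = {α ∈ H* \ {0} : L_α ≠ 0}`. -/
def DeltaJordanLie.roots (J : DeltaJordanLie K L) (H : Submodule K L) :
    Set (Module.Dual K H) :=
  {α | α ≠ 0 ∧ J.rootSpace H α ≠ ⊥}

/-- `H` is a splitting Cartan subalgebra: a maximal abelian subalgebra such that
`L` decomposes as the direct sum of the simultaneous eigenspaces `L_α`, with `L_0 = H`. -/
structure DeltaJordanLie.IsSplitting (J : DeltaJordanLie K L) (H : Submodule K L) : Prop where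
  abelian : ∀ x ∈ H, ∀ y ∈ H, J.br x y = 0
  maximal : ∀ H' : Submodule K L, H ≤ H' →
      (∀ x ∈ H', ∀ y ∈ H', J.br x y = 0) → H' = H
  zero_rootSpace : J.rootSpace H 0 = H
  indep : iSupIndep (fun α : Module.Dual K H => J.rootSpace H α)
  decomp : (⨆ α : Module.Dual K H, J.rootSpace H α) = ⊤

/-- The root system is symmetric. -/
def DeltaJordanLie.SymmetricRoots (J : DeltaJordanLie K L) (H : Submodule K L) : Prop :=
  ∀ α ∈ J.roots H, -α ∈ J.roots H

/-- The δ-twisted partial sums of a sequence of roots: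
`s₀ = f 0`, `s_{k+1} = δ • (s_k + f (k+1))`, so that
`s_k = δ^k f 0 + δ^k f 1 + δ^{k-1} f 2 + ⋯ + δ f k`. -/
def connSum {H : Submodule K L} (d : K) (f : ℕ → Module.Dual K H) : ℕ → Module.Dual K H
  | 0 => f 0
  | k + 1 => d • (connSum d f k + f (k + 1))

/-- `f 0, …, f n` is a connection from `α` to `β`: all terms are roots, `f 0 = α`,
all proper δ-twisted partial sums are roots, and the final sum is `±β`. -/
def IsConnection (J : DeltaJordanLie K L) (H : Submodule K L)
    (α β : Module.Dual K H) (n : ℕ) (f : ℕ → Module.Dual K H) : Prop :=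
  (∀ i ≤ n, f i ∈ J.roots H) ∧ f 0 = α ∧
  (∀ k < n, connSum J.delta f k ∈ J.roots H) ∧
  (connSum J.delta f n = β ∨ connSum J.delta f n = -β)

/-- `α` and `β` are connected. -/
def Connected (J : DeltaJordanLie K L) (H : Submodule K L)
    (α β : Module.Dual K H) : Prop :=
  ∃ n f, IsConnection J H α β n f

/-- `Λ_α`: the set of nonzero roots connected to `α`. -/
def connectedRoots (J : DeltaJordanLie K L) (H : Submodule K L)
    (α : Module.Dual K H) : Set (Module.Dual K H) :=
  {β ∈ J.roots H | Connected J H α β}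

/-- An ideal of a δ Jordan-Lie algebra: a submodule with `[I,L] ⊆ I` and `[L,I] ⊆ I`. -/
def IsIdeal (J : DeltaJordanLie K L) (I : Submodule K L) : Prop :=
  ∀ x ∈ I, ∀ y : L, J.br x y ∈ I ∧ J.br y x ∈ I

/-- `H_S = span{[L_β, L_{-β}] : β ∈ S}`. -/
def rootSpan (J : DeltaJordanLie K L) (H : Submodule K L)
    (S : Set (Module.Dual K H)) : Submodule K L :=
  Submodule.span K {z : L | ∃ β ∈ S, ∃ x ∈ J.rootSpace H β, ∃ y ∈ J.rootSpace H (-β),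
    z = J.br x y}

/-- `L_S = H_S ⊕ V_S`, the subalgebra associated to a set of roots `S`. -/
def decIdeal (J : DeltaJordanLie K L) (H : Submodule K L)
    (S : Set (Module.Dual K H)) : Submodule K L :=
  rootSpan J H S ⊔ ⨆ β ∈ S, J.rootSpace H β


section Aux

variable {K L : Type*} [Field K] [AddCommGroup L] [Module K L]
variable {J : DeltaJordanLie K L} {H : Submodule K L}

lemma delta_mul_self (J : DeltaJordanLie K L) : J.delta * J.delta = 1 := by
  rcases J.delta_pm with h | h <;> simp [h]

lemma delta_ne_zero (J : DeltaJordanLie K L) : J.delta ≠ 0 := by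
  rcases J.delta_pm with h | h <;> simp [h]

lemma dual_neg_one_smul {H : Submodule K L} (α : Module.Dual K H) :
    (-1 : K) • α = -α := neg_one_smul K α

lemma roots_sign (hsym : J.SymmetricRoots H) {c : K} (hc : c = 1 ∨ c = -1)
    {α : Module.Dual K H} (hα : α ∈ J.roots H) : c • α ∈ J.roots H := by
  rcases hc with h | h
  · simpa [h] using hα
  · rw [h, dual_neg_one_smul]; exact hsym α hα

lemma connSum_congr {d : K} {f g : ℕ → Module.Dual K H} {k : ℕ}
    (h : ∀ i ≤ k, f i = g i) : connSum (L := L) d f k = connSum d g k := by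
  induction k with
  | zero => simpa [connSum] using h 0 le_rfl
  | succ k ih =>
    rw [connSum, connSum, ih (fun i hi => h i (hi.trans (Nat.le_succ k))), h (k+1) le_rfl]

lemma connected_refl {α : Module.Dual K H} (hα : α ∈ J.roots H) : Connected J H α α :=
  ⟨0, fun _ => α, fun _ _ => hα, rfl, fun k hk => absurd hk (Nat.not_lt_zero k), Or.inl rfl⟩

lemma connected_neg {α β : Module.Dual K H} (h : Connected J H α β) :
    Connected J H α (-β) := by
  obtain ⟨n, f, h1, h2, h3, h4⟩ := h
  exact ⟨n, f, h1, h2, h3, by rcases h4 with h | h <;> simp [h]⟩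

lemma connected_trans (hsym : J.SymmetricRoots H) {α β γ : Module.Dual K H}
    (hab : Connected J H α β) (hbc : Connected J H β γ) : Connected J H α γ := by
  obtain ⟨n, f, hf1, hf2, hf3, hf4⟩ := hab
  obtain ⟨m, g, hg1, hg2, hg3, hg4⟩ := hbc
  obtain ⟨c, hc, hcs⟩ : ∃ c : K, (c = 1 ∨ c = -1) ∧ connSum J.delta f n = c • β := by
    rcases hf4 with h | h
    · exact ⟨1, Or.inl rfl, by simp [h]⟩
    · exact ⟨-1, Or.inr rfl, by rw [h, dual_neg_one_smul]⟩
  set h : ℕ → Module.Dual K H := fun i => if i ≤ n then f i else c • g (i - n) with hdef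
  have hagree : ∀ i ≤ n, h i = f i := fun i hi => by simp [hdef, hi]
  have hsums : ∀ j, connSum J.delta h (n + j) = c • connSum J.delta g j := by
    intro j
    induction j with
    | zero =>
      rw [Nat.add_zero, connSum_congr hagree, hcs]
      have : connSum (L := L) J.delta g 0 = β := hg2
      rw [this]
    | succ j ih =>
      have hnot : ¬ (n + j + 1 ≤ n) := by omega
      have hidx : n + j + 1 - n = j + 1 := by omega
      rw [show n + (j+1) = (n + j) + 1 from rfl, connSum, ih, hdef]
      simp only [hnot, if_false, hidx]
      simp only [connSum, smul_add, smul_comm J.delta c]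
  refine ⟨n + m, h, ?_, ?_, ?_, ?_⟩
  · intro i hi
    by_cases hin : i ≤ n
    · rw [hagree i hin]; exact hf1 i hin
    · simp only [hdef, hin, if_false]
      exact roots_sign hsym hc (hg1 (i - n) (by omega))
  · rw [hagree 0 (Nat.zero_le n)]; exact hf2
  · intro k hk
    by_cases hkn : k ≤ n
    · rcases lt_or_eq_of_le hkn with hlt | heq
      · rw [connSum_congr (fun i hi => hagree i (hi.trans hkn))]
        exact hf3 k hlt
      · subst heq
        rw [connSum_congr hagree, hcs]
        exact roots_sign hsym hc (by rw [← hg2]; exact hg1 0 (Nat.zero_le m))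
    · have : k = n + (k - n) := by omega
      rw [this, hsums]
      exact roots_sign hsym hc (hg3 (k - n) (by omega))
  · rw [hsums m]
    rcases hg4 with h4 | h4 <;> rcases hc with h | h <;> rw [h4, h] <;>
      simp [dual_neg_one_smul]

lemma connected_symm (hsym : J.SymmetricRoots H) {α β : Module.Dual K H}
    (hβ : β ∈ J.roots H) (h : Connected J H α β) : Connected J H β α := by
  obtain ⟨n, f, hf1, hf2, hf3, hf4⟩ := h
  obtain ⟨c, hc, hcs⟩ : ∃ c : K, (c = 1 ∨ c = -1) ∧ connSum J.delta f n = c • β := by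
    rcases hf4 with h | h
    · exact ⟨1, Or.inl rfl, by simp [h]⟩
    · exact ⟨-1, Or.inr rfl, by rw [h, dual_neg_one_smul]⟩
  have hcd : -(c * J.delta) = 1 ∨ -(c * J.delta) = -1 := by
    rcases hc with h | h <;> rcases J.delta_pm with h2 | h2 <;> simp [h, h2]
  set g : ℕ → Module.Dual K H :=
    fun i => if i = 0 then β else (-(c * J.delta)) • f (n - i + 1) with hgdef
  have hsums : ∀ k ≤ n, connSum J.delta g k = c • connSum J.delta f (n - k) := by
    intro k hk
    induction k with
    | zero =>
      show g 0 = c • connSum J.delta f n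
      rw [hcs, smul_smul]
      rcases hc with h | h <;> simp [hgdef, h]
    | succ k ih =>
      have hk' : k ≤ n := by omega
      obtain ⟨j, hj⟩ : ∃ j, n - (k + 1) = j := ⟨n - (k+1), rfl⟩
      have hnk : n - k = j + 1 := by omega
      have hidx : n - (k + 1) + 1 = j + 1 := by omega
      rw [connSum, ih hk', hj, hnk, connSum]
      have hg : g (k + 1) = (-(c * J.delta)) • f (j + 1) := by
        simp only [hgdef, Nat.succ_ne_zero, if_false]
        rw [hidx]
      rw [hg]
      simp only [smul_add, smul_smul]
      have e1 : J.delta * (c * J.delta) = c := by linear_combination c * delta_mul_self J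
      have e2 : J.delta * -(c * J.delta) = -c := by linear_combination (-c) * delta_mul_self J
      rw [e1, e2, neg_smul]
      abel
  refine ⟨n, g, ?_, ?_, ?_, ?_⟩
  · intro i hi
    by_cases hi0 : i = 0
    · simpa [hgdef, hi0] using hβ
    · simp only [hgdef, hi0, if_false]
      exact roots_sign hsym hcd (hf1 (n - i + 1) (by omega))
  · simp [hgdef]
  · intro k hk
    rw [hsums k (le_of_lt hk)]
    by_cases hk0 : k = 0
    · subst hk0
      rw [Nat.sub_zero, hcs, smul_smul]
      rcases hc with h | h <;> simpa [h] using hβ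
    · exact roots_sign hsym hc (hf3 (n - k) (by omega))
  · rw [hsums n le_rfl, Nat.sub_self]
    have : connSum (L := L) J.delta f 0 = α := hf2
    rw [this]
    rcases hc with h | h <;> simp [h, dual_neg_one_smul]

lemma connected_single {β γ : Module.Dual K H} (hβ : β ∈ J.roots H) (hγ : γ ∈ J.roots H) :
    Connected J H β (J.delta • (β + γ)) := by
  refine ⟨1, fun i => if i = 0 then β else γ, ?_, by simp, ?_, Or.inl ?_⟩
  · intro i _
    by_cases h : i = 0 <;> simp [h, hβ, hγ]
  · intro k hk
    interval_cases k
    simpa [connSum] using hβ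
  · simp [connSum]

lemma connected_ext (hsym : J.SymmetricRoots H) {α β γ : Module.Dual K H}
    (h : Connected J H α β) (hβ : β ∈ J.roots H) (hγ : γ ∈ J.roots H) :
    Connected J H α (J.delta • (β + γ)) :=
  connected_trans hsym h (connected_single hβ hγ)

lemma connected_back (hsym : J.SymmetricRoots H) {α β γ ε : Module.Dual K H}
    (h : Connected J H α ε) (hε : ε ∈ J.roots H) (hβ : β ∈ J.roots H)
    (he : ε = J.delta • (β + γ)) : Connected J H α γ := by
  have hdb : (-J.delta) • β ∈ J.roots H := by
    apply roots_sign hsym _ hβ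
    rcases J.delta_pm with h2 | h2 <;> simp [h2]
  have h2 := connected_ext hsym h hε hdb
  have he2 : J.delta • (ε + (-J.delta) • β) = γ := by
    rw [he, smul_add, smul_smul, smul_smul, delta_mul_self, mul_neg, delta_mul_self,
      one_smul, neg_one_smul]
    abel
  rwa [he2] at h2

end Aux


section Aux2

variable {K L : Type*} [Field K] [AddCommGroup L] [Module K L]
variable {J : DeltaJordanLie K L} {H : Submodule K L}

lemma br_mem_rootSpace {α β : Module.Dual K H} {x y : L}
    (hx : x ∈ J.rootSpace H α) (hy : y ∈ J.rootSpace H β) :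
    J.br x y ∈ J.rootSpace H (J.delta • (α + β)) := by
  intro h
  rw [J.jacobi (h : L) x y, hx h, hy h]
  simp only [map_smul, LinearMap.smul_apply, LinearMap.add_apply]
  rw [smul_smul, smul_smul, ← add_smul, smul_eq_mul]
  congr 1
  ring

lemma rootSpace_cases (J : DeltaJordanLie K L) (H : Submodule K L) (γ : Module.Dual K H) :
    γ = 0 ∨ γ ∈ J.roots H ∨ J.rootSpace H γ = ⊥ := by
  by_cases h0 : γ = 0
  · exact Or.inl h0
  · by_cases hb : J.rootSpace H γ = ⊥
    · exact Or.inr (Or.inr hb)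
    · exact Or.inr (Or.inl ⟨h0, hb⟩)

lemma rootSpan_le_H (hs : J.IsSplitting H) (S : Set (Module.Dual K H)) :
    rootSpan J H S ≤ H := by
  rw [rootSpan, Submodule.span_le]
  rintro z ⟨β, -, x, hx, y, hy, rfl⟩
  have h := br_mem_rootSpace hx hy
  rw [add_neg_cancel, smul_zero, hs.zero_rootSpace] at h
  exact h

lemma rootSpan_le_decIdeal {S : Set (Module.Dual K H)} :
    rootSpan J H S ≤ decIdeal J H S := le_sup_left

lemma rootSpace_le_decIdeal {S : Set (Module.Dual K H)} {β : Module.Dual K H} (hβ : β ∈ S) :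
    J.rootSpace H β ≤ decIdeal J H S :=
  le_trans (le_iSup₂ (f := fun β (_ : β ∈ S) => J.rootSpace H β) β hβ) le_sup_right

lemma mem_connectedRoots {α β : Module.Dual K H} (h1 : β ∈ J.roots H)
    (h2 : Connected J H α β) : β ∈ connectedRoots J H α := Set.mem_sep h1 h2

lemma connectedRoots_root {α β : Module.Dual K H} (h : β ∈ connectedRoots J H α) :
    β ∈ J.roots H := h.1

lemma connectedRoots_conn {α β : Module.Dual K H} (h : β ∈ connectedRoots J H α) :
    Connected J H α β := h.2

lemma vanish (hs : J.IsSplitting H) (hsym : J.SymmetricRoots H)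
    {α γ : Module.Dual K H} (hγ : γ ∈ J.roots H) (hnc : ¬ Connected J H α γ)
    {v : L} (hv : v ∈ J.rootSpace H γ) :
    rootSpan J H (connectedRoots J H α) ≤ LinearMap.ker (J.br.flip v) := by
  rw [rootSpan, Submodule.span_le]
  rintro z ⟨β, hβ, x, hx, y, hy, rfl⟩
  obtain ⟨hβr, hβc⟩ : β ∈ J.roots H ∧ Connected J H α β := hβ
  have key : ∀ ε : Module.Dual K H, ε ∈ J.roots H → Connected J H α ε →
      ∀ w ∈ J.rootSpace H ε, J.br w v = 0 := by
    intro ε hεr hεc w hw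
    have hmem := br_mem_rootSpace hw hv
    rcases rootSpace_cases J H (J.delta • (ε + γ)) with h0 | hr | hb
    · exfalso
      apply hnc
      have h1 : ε + γ = 0 := by
        rcases smul_eq_zero.mp h0 with h | h
        · exact absurd h (delta_ne_zero J)
        · exact h
      have h2 : γ = -ε := eq_neg_of_add_eq_zero_right h1
      rw [h2]
      exact connected_neg hεc
    · exact absurd (connected_back hsym (connected_ext hsym hεc hεr hγ) hr hεr rfl) hnc
    · rw [hb] at hmem
      simpa using hmem
  have hxv : J.br x v = 0 := key β hβr hβc x hx
  have hyv : J.br y v = 0 := key (-β) (hsym β hβr) (connected_neg hβc) y hy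
  have hj := J.jacobi x y v
  rw [hxv, hyv, map_zero, map_zero, smul_zero, add_zero] at hj
  simp only [SetLike.mem_coe, LinearMap.mem_ker, LinearMap.flip_apply]
  rcases smul_eq_zero.mp hj.symm with h | h
  · exact absurd h (delta_ne_zero J)
  · exact h

/-- The set of `x` such that `[x, L] ⊆ I`. -/
def brIn (J : DeltaJordanLie K L) (I : Submodule K L) : Submodule K L where
  carrier := {x : L | ∀ v : L, J.br x v ∈ I}
  zero_mem' := by intro v; simp
  add_mem' := by
    intro a b ha hb v
    rw [map_add, LinearMap.add_apply]
    exact I.add_mem (ha v) (hb v)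
  smul_mem' := by
    intro c a ha v
    rw [map_smul, LinearMap.smul_apply]
    exact I.smul_mem c (ha v)

/-- The set of `x` such that `[x, I] = 0`. -/
def brZero (J : DeltaJordanLie K L) (I : Submodule K L) : Submodule K L where
  carrier := {x : L | ∀ y ∈ I, J.br x y = 0}
  zero_mem' := by intro y _; simp
  add_mem' := by
    intro a b ha hb y hy
    rw [map_add, LinearMap.add_apply, ha y hy, hb y hy, add_zero]
  smul_mem' := by
    intro c a ha y hy
    rw [map_smul, LinearMap.smul_apply, ha y hy, smul_zero]

end Aux2


section Aux3

variable {K L : Type*} [Field K] [AddCommGroup L] [Module K L]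
variable {J : DeltaJordanLie K L} {H : Submodule K L}

lemma ideal_main (hs : J.IsSplitting H) (hsym : J.SymmetricRoots H)
    {α : Module.Dual K H} (hα : α ∈ J.roots H) :
    decIdeal J H (connectedRoots J H α) ≤ brIn J (decIdeal J H (connectedRoots J H α)) := by
  set S := connectedRoots J H α with hS
  set I := decIdeal J H S with hI
  apply sup_le
  · intro z hz
    have hzspan : z ∈ rootSpan J H S := hz
    have hzH : z ∈ H := rootSpan_le_H hs S hz
    intro v
    have hle : (⊤ : Submodule K L) ≤ Submodule.comap (J.br z) I := by
      rw [← hs.decomp]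
      apply iSup_le
      intro γ
      rcases rootSpace_cases J H γ with h0 | hr | hb
      · subst h0
        rw [hs.zero_rootSpace]
        intro w hw
        rw [Submodule.mem_comap, hs.abelian z hzH w hw]
        exact I.zero_mem
      · by_cases hc : Connected J H α γ
        · intro w hw
          have hzw : J.br z w = γ ⟨z, hzH⟩ • w := hw ⟨z, hzH⟩
          rw [Submodule.mem_comap, hzw]
          exact I.smul_mem _ (rootSpace_le_decIdeal (mem_connectedRoots hr hc) hw)
        · intro w hw
          have h2 := vanish hs hsym hr hc hw hzspan
          rw [LinearMap.mem_ker, LinearMap.flip_apply] at h2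
          rw [Submodule.mem_comap, h2]
          exact I.zero_mem
      · rw [hb]
        exact bot_le
    exact Submodule.mem_comap.mp (hle Submodule.mem_top)
  · apply iSup_le
    intro β
    apply iSup_le
    intro hβS
    have hβr := connectedRoots_root hβS
    have hβc := connectedRoots_conn hβS
    intro x hx
    have hxI : x ∈ I := rootSpace_le_decIdeal hβS hx
    intro v
    have hle : (⊤ : Submodule K L) ≤ Submodule.comap (J.br x) I := by
      rw [← hs.decomp]
      apply iSup_le
      intro γ
      rcases rootSpace_cases J H γ with h0 | hr | hb
      · subst h0
        rw [hs.zero_rootSpace]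
        intro w hw
        have hwx : J.br w x = β ⟨w, hw⟩ • x := hx ⟨w, hw⟩
        rw [Submodule.mem_comap, J.anti x w, hwx]
        exact I.neg_mem (I.smul_mem _ (I.smul_mem _ hxI))
      · intro w hw
        have hm := br_mem_rootSpace hx hw
        rw [Submodule.mem_comap]
        rcases rootSpace_cases J H (J.delta • (β + γ)) with h0 | hr2 | hb2
        · have h1 : β + γ = 0 := by
            rcases smul_eq_zero.mp h0 with h | h
            · exact absurd h (delta_ne_zero J)
            · exact h
          have h2 : γ = -β := eq_neg_of_add_eq_zero_right h1
          apply rootSpan_le_decIdeal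
          apply Submodule.subset_span
          exact ⟨β, hβS, x, hx, w, by rwa [h2] at hw, rfl⟩
        · exact rootSpace_le_decIdeal (mem_connectedRoots hr2 (connected_ext hsym hβc hβr hr)) hm
        · rw [hb2] at hm
          simp only [Submodule.mem_bot] at hm
          rw [hm]
          exact I.zero_mem
      · rw [hb]
        exact bot_le
    exact Submodule.mem_comap.mp (hle Submodule.mem_top)

lemma zero_main (hs : J.IsSplitting H) (hsym : J.SymmetricRoots H)
    {α β : Module.Dual K H} (hnc : ¬ Connected J H α β) :
    decIdeal J H (connectedRoots J H α) ≤ brZero J (decIdeal J H (connectedRoots J H β)) := by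
  have hncg : ∀ γ, γ ∈ J.roots H → Connected J H β γ → ¬ Connected J H α γ := by
    intro γ hγr hbg hag
    exact hnc (connected_trans hsym hag (connected_symm hsym hγr hbg))
  apply sup_le
  · intro z hz y hy
    have hle : decIdeal J H (connectedRoots J H β) ≤ LinearMap.ker (J.br z) := by
      apply sup_le
      · intro w hw
        rw [LinearMap.mem_ker]
        exact hs.abelian z (rootSpan_le_H hs _ hz) w (rootSpan_le_H hs _ hw)
      · apply iSup_le
        intro γ
        apply iSup_le
        intro hγS
        obtain ⟨hγr, hγc⟩ : γ ∈ J.roots H ∧ Connected J H β γ := hγS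
        intro w hw
        have h2 := vanish hs hsym hγr (hncg γ hγr hγc) hw hz
        rw [LinearMap.mem_ker, LinearMap.flip_apply] at h2
        rw [LinearMap.mem_ker, h2]
    have := hle hy
    rwa [LinearMap.mem_ker] at this
  · apply iSup_le
    intro γ
    apply iSup_le
    intro hγS
    obtain ⟨hγr, hγc⟩ : γ ∈ J.roots H ∧ Connected J H α γ := hγS
    intro x hx y hy
    have hnbc : ¬ Connected J H β γ := fun hbg => hncg γ hγr hbg hγc
    have hle : decIdeal J H (connectedRoots J H β) ≤ LinearMap.ker (J.br x) := by
      apply sup_le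
      · intro w hw
        rw [LinearMap.mem_ker]
        have h1 := vanish hs hsym hγr hnbc hx hw
        rw [LinearMap.mem_ker, LinearMap.flip_apply] at h1
        rw [J.anti x w, h1, smul_zero, neg_zero]
      · apply iSup_le
        intro ε
        apply iSup_le
        intro hεS
        obtain ⟨hεr, hεc⟩ : ε ∈ J.roots H ∧ Connected J H β ε := hεS
        intro w hw
        rw [LinearMap.mem_ker]
        have hm := br_mem_rootSpace hx hw
        rcases rootSpace_cases J H (J.delta • (γ + ε)) with h0 | hr2 | hb2
        · exfalso
          have h1 : γ + ε = 0 := by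
            rcases smul_eq_zero.mp h0 with h | h
            · exact absurd h (delta_ne_zero J)
            · exact h
          have h2 : ε = -γ := eq_neg_of_add_eq_zero_right h1
          apply hnbc
          have h3 := connected_neg hεc
          rwa [h2, neg_neg] at h3
        · exfalso
          have ha := connected_ext hsym hγc hγr hεr
          have hb3 := connected_ext hsym hεc hεr hγr
          rw [add_comm ε γ] at hb3
          exact hncg _ hr2 hb3 ha
        · rw [hb2] at hm
          simpa using hm
    have := hle hy
    rwa [LinearMap.mem_ker] at this

end Aux3

/-- `L = U + Σ_{[α]} I_{[α]}` where `U` is a complement of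
`span{[L_α, L_{-α}] : α ∈ Λ}` in `H`, each `I_{[α]} = L_{Λ_α}` is an ideal, and
`[I_{[α]}, I_{[β]}] = 0` for distinct classes. -/
theorem stmt9 (J : DeltaJordanLie K L) (H : Submodule K L) (hs : J.IsSplitting H)
    (hsym : J.SymmetricRoots H) (U : Submodule K L) (hUH : U ≤ H)
    (hUint : U ⊓ rootSpan J H (J.roots H) = ⊥)
    (hUsup : U ⊔ rootSpan J H (J.roots H) = H) :
    U ⊔ (⨆ α ∈ J.roots H, decIdeal J H (connectedRoots J H α)) = ⊤ ∧
    (∀ α ∈ J.roots H, IsIdeal J (decIdeal J H (connectedRoots J H α))) ∧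
    (∀ α ∈ J.roots H, ∀ β ∈ J.roots H, ¬ Connected J H α β →
      ∀ x ∈ decIdeal J H (connectedRoots J H α),
        ∀ y ∈ decIdeal J H (connectedRoots J H β), J.br x y = 0) := by
  refine ⟨?_, ?_, ?_⟩
  · apply le_antisymm le_top
    rw [← hs.decomp]
    apply iSup_le
    intro γ
    rcases rootSpace_cases J H γ with h0 | hr | hb
    · subst h0
      rw [hs.zero_rootSpace]
      refine le_trans (le_of_eq hUsup.symm) ?_
      apply sup_le
      · exact le_sup_left
      · refine le_trans ?_ le_sup_right
        rw [rootSpan, Submodule.span_le]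
        rintro z ⟨β, hβ, x, hx, y, hy, rfl⟩
        have hz : J.br x y ∈ decIdeal J H (connectedRoots J H β) :=
          rootSpan_le_decIdeal (Submodule.subset_span
            ⟨β, mem_connectedRoots hβ (connected_refl hβ), x, hx, y, hy, rfl⟩)
        exact le_iSup₂ (f := fun α (_ : α ∈ J.roots H) =>
          decIdeal J H (connectedRoots J H α)) β hβ hz
    · refine le_trans ?_ le_sup_right
      refine le_trans ?_ (le_iSup₂ (f := fun α (_ : α ∈ J.roots H) =>
        decIdeal J H (connectedRoots J H α)) γ hr)
      exact rootSpace_le_decIdeal (mem_connectedRoots hr (connected_refl hr))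
    · rw [hb]
      exact bot_le
  · intro α hα x hx y
    have h1 : ∀ v : L, J.br x v ∈ decIdeal J H (connectedRoots J H α) :=
      ideal_main hs hsym hα hx
    refine ⟨h1 y, ?_⟩
    rw [J.anti y x]
    exact Submodule.neg_mem _ (Submodule.smul_mem _ _ (h1 y))
  · intro α hα β hβ hnc x hx y hy
    exact zero_main hs hsym hnc hx y hy
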